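/- Let M and N be p.f.d. free ℝ^n-persistence modules with n ≥ 2. If M and N are δ-interleaved, then there is an (n−1)δ-matching between B(M) and B(N); hence d_B(M,N) ≤ (n−1)·d_I(M,N). -/

import Mathlib

open CategoryTheory Classical

noncomputable section

/-- Convexity of a subset of a poset. -/
def IsConvex {P : Type} [Preorder P] (I : Set P) : Prop :=
  ∀ ⦃p q r : P⦄, p ∈ I → q ∈ I → p ≤ r → r ≤ q → r ∈ I

/-- Zigzag connectivity within a subset. -/
def ZigzagConnected {P : Type} [Preorder P] (I : Set P) : Prop :=
  ∀ p ∈ I, ∀ q ∈ I,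
    Relation.ReflTransGen (fun a b => a ∈ I ∧ b ∈ I ∧ (a ≤ b ∨ b ≤ a)) p q

/-- An interval in a poset: nonempty, convex, and zigzag connected. -/
def IsIntervalSet {P : Type} [Preorder P] (I : Set P) : Prop :=
  I.Nonempty ∧ IsConvex I ∧ ZigzagConnected I

open scoped Classical in
/-- The pointwise vector space of the interval module: `k` (as `⊤`) on `I`, `0` off `I`. -/
def objSub (k : Type) [Field k] {P : Type} [Preorder P] (I : Set P) (p : P) : Submodule k k :=
  if p ∈ I then ⊤ else ⊥

open scoped Classical in
/-- The interval persistence module `𝕀^I` as a functor `P ⥤ ModuleCat k`. -/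
def intervalModule (k : Type) [Field k] {P : Type} [Preorder P] (I : Set P)
    (hI : IsConvex I) : P ⥤ ModuleCat.{0} k where
  obj p := ModuleCat.of k (objSub k I p)
  map {p q} h :=
    if hpq : p ∈ I ∧ q ∈ I then
      ModuleCat.ofHom
        { toFun := fun x => ⟨(x : k), by simp [objSub, hpq.2]⟩
          map_add' := by intros; rfl
          map_smul' := by intros; rfl }
    else 0
  map_id := by
    intro p
    try dsimp only
    by_cases hp : p ∈ I
    · rw [dif_pos ⟨hp, hp⟩]; rfl
    · rw [dif_neg (fun h => hp h.1)]
      haveI : Subsingleton ↥(objSub k I p) := by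
        rw [objSub, if_neg hp]; infer_instance
      apply ModuleCat.hom_ext; apply LinearMap.ext; intro x
      exact this.allEq _ _
  map_comp := by
    intro p q r hpq hqr
    try dsimp only
    by_cases hpr : p ∈ I ∧ r ∈ I
    · have hq : q ∈ I := hI hpr.1 hpr.2 (leOfHom hpq) (leOfHom hqr)
      rw [dif_pos hpr, dif_pos ⟨hpr.1, hq⟩, dif_pos ⟨hq, hpr.2⟩]
      rfl
    · rw [dif_neg hpr]
      by_cases hp : p ∈ I
      · have hr : r ∉ I := fun hr => hpr ⟨hp, hr⟩
        haveI : Subsingleton ↥(objSub k I r) := by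
          rw [objSub, if_neg hr]; infer_instance
        apply ModuleCat.hom_ext; apply LinearMap.ext; intro x
        exact this.allEq _ _
      · haveI : Subsingleton ↥(objSub k I p) := by
          rw [objSub, if_neg hp]; infer_instance
        apply ModuleCat.hom_ext; apply LinearMap.ext; intro x
        have hx : x = 0 := this.allEq x 0
        rw [hx]
        simp

open DirectSum

open scoped ENNReal

/-- Direct sum of a family of persistence modules. -/
def dsumF (k : Type) [Field k] {P : Type} [Preorder P] {ι : Type}
    (F : ι → P ⥤ ModuleCat.{0} k) : P ⥤ ModuleCat.{0} k where
  obj p := ModuleCat.of k (⨁ i, ((F i).obj p : Type))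
  map {p q} h := ModuleCat.ofHom
    (DFinsupp.mapRange.linearMap (fun i => ((F i).map h).hom))
  map_id := by
    intro p
    try dsimp only
    simp only [CategoryTheory.Functor.map_id, ModuleCat.hom_id]
    apply ModuleCat.hom_ext
    exact DFinsupp.mapRange.linearMap_id
  map_comp := by
    intro p q r hpq hqr
    try dsimp only
    simp only [CategoryTheory.Functor.map_comp]
    apply ModuleCat.hom_ext; apply LinearMap.ext; intro x
    apply DFinsupp.ext; intro i
    rfl

/-- Use the preorder category structure on `Fin n → ℝ`. -/
instance RnCat (n : ℕ) : Category (Fin n → ℝ) := Preorder.smallCategory _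

/-- Diagonal translation by `ε` as an endofunctor of the poset `Fin n → ℝ`. -/
def transl (n : ℕ) (ε : ℝ) : (Fin n → ℝ) ⥤ (Fin n → ℝ) :=
  Monotone.functor (f := fun p i => p i + ε)
    (fun _ _ hab i => by dsimp only; linarith [hab i])

/-- `M` and `N` are `ε`-interleaved `ℝⁿ`-persistence modules. -/
def Interleaved (k : Type) [Field k] {n : ℕ} (ε : ℝ)
    (M N : (Fin n → ℝ) ⥤ ModuleCat.{0} k) : Prop :=
  ∃ _hε : 0 ≤ ε, ∃ (f : M ⟶ transl n ε ⋙ N) (g : N ⟶ transl n ε ⋙ M),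
    (∀ p : Fin n → ℝ, f.app p ≫ g.app (fun i => p i + ε) =
      M.map (homOfLE (show p ≤ fun i => p i + ε + ε from
        fun i => by show p i ≤ p i + ε + ε; linarith))) ∧
    (∀ p : Fin n → ℝ, g.app p ≫ f.app (fun i => p i + ε) =
      N.map (homOfLE (show p ≤ fun i => p i + ε + ε from
        fun i => by show p i ≤ p i + ε + ε; linarith)))

/-- An interval `I ⊆ ℝⁿ` is `δ`-trivial: it contains no pair `p ≤ p + δ`. -/
def SetTrivial {n : ℕ} (δ : ℝ) (I : Set (Fin n → ℝ)) : Prop :=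
  ¬ ∃ p, p ∈ I ∧ (fun i => p i + δ) ∈ I

/-- Barcode data: an indexed family of nonempty convex intervals in `ℝⁿ`. -/
structure Barcode (n : ℕ) where
  ι : Type
  I : ι → Set (Fin n → ℝ)
  nonempty : ∀ i, (I i).Nonempty
  conv : ∀ i, IsConvex (I i)

/-- The interval decomposable module associated to barcode data. -/
def Barcode.module (k : Type) [Field k] {n : ℕ} (B : Barcode n) :
    (Fin n → ℝ) ⥤ ModuleCat.{0} k :=
  dsumF k fun i => intervalModule k (B.I i) (B.conv i)

/-- `B` is pointwise finite dimensional. -/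
def Barcode.pfd (k : Type) [Field k] {n : ℕ} (B : Barcode n) : Prop :=
  ∀ p : Fin n → ℝ, Module.Finite k ((B.module k).obj p)

/-- An `ε`-matching between two barcodes: a partial bijection such that unmatched
intervals are `2ε`-trivial and matched intervals are `ε`-interleaved. -/
def Matched (k : Type) [Field k] {n : ℕ} (ε : ℝ) (B C : Barcode n) : Prop :=
  0 ≤ ε ∧ ∃ (A : Set B.ι) (A' : Set C.ι) (e : A ≃ A'),
    (∀ i ∉ A, SetTrivial (2 * ε) (B.I i)) ∧
    (∀ j ∉ A', SetTrivial (2 * ε) (C.I j)) ∧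
    (∀ i : A, Interleaved k ε
      (intervalModule k (B.I i) (B.conv i))
      (intervalModule k (C.I (e i)) (C.conv (e i))))

/-- The interleaving distance, valued in `ℝ≥0∞`. -/
def dInt (k : Type) [Field k] {n : ℕ} (M N : (Fin n → ℝ) ⥤ ModuleCat.{0} k) : ℝ≥0∞ :=
  ⨅ (ε : ℝ) (_ : Interleaved k ε M N), ENNReal.ofReal ε

/-- The bottleneck distance between barcodes, valued in `ℝ≥0∞`. -/
def dBot (k : Type) [Field k] {n : ℕ} (B C : Barcode n) : ℝ≥0∞ :=
  ⨅ (ε : ℝ) (_ : Matched k ε B C), ENNReal.ofReal ε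

/-- Rectangles: products of real intervals. -/
def rectSet {n : ℕ} (R : Fin n → Set ℝ) : Set (Fin n → ℝ) := {x | ∀ i, x i ∈ R i}

theorem rectSet_convex {n : ℕ} (R : Fin n → Set ℝ) (h : ∀ i, (R i).OrdConnected) :
    IsConvex (rectSet R) := by
  intro p q r hp hq hpr hrq i
  exact (h i).out (hp i) (hq i) ⟨hpr i, hrq i⟩

/-- A barcode consists of rectangles. -/
def IsRectBarcode {n : ℕ} (B : Barcode n) : Prop :=
  ∀ i, ∃ R : Fin n → Set ℝ,
    (∀ j, (R j).Nonempty ∧ (R j).OrdConnected) ∧ B.I i = rectSet R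

/-- Free intervals `⟨p⟩ = {q | q ≥ p}` are convex. -/
theorem ici_convex {P : Type} [Preorder P] (p : P) : IsConvex (Set.Ici p) :=
  fun _ _ _ ha _ har _ => ha.trans har

/-- A barcode consists of free intervals. -/
def IsFreeBarcode {n : ℕ} (B : Barcode n) : Prop :=
  ∀ i, ∃ p : Fin n → ℝ, B.I i = Set.Ici p


namespace FreeStab

open Set Function

/-- Bjerkevik's key inequality. -/
lemma key_lemma {n : ℕ} (hn : 2 ≤ n) {δ : ℝ} (hδ : 0 ≤ δ) (x m z : Fin n → ℝ)
    (h1 : ∀ l, x l ≤ m l + δ) (h2 : ∀ l, m l ≤ z l + δ)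
    (h3 : ∑ l, z l ≤ ∑ l, x l) :
    (∀ l, |m l - x l| ≤ ((n : ℝ) - 1) * δ) ∨ (∀ l, |m l - z l| ≤ ((n : ℝ) - 1) * δ) := by
  have hn1 : (1 : ℝ) ≤ (n : ℝ) - 1 := by
    have : (2 : ℝ) ≤ (n : ℝ) := by exact_mod_cast hn
    linarith
  have hδ' : δ ≤ ((n : ℝ) - 1) * δ := by nlinarith
  by_cases hc : ∀ l, m l - x l ≤ ((n : ℝ) - 1) * δ
  · left
    intro l
    rw [abs_le]
    constructor
    · have := h1 l; linarith
    · exact hc l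
  · right
    push_neg at hc
    obtain ⟨kk, hkk⟩ := hc
    intro l
    rw [abs_le]
    have hhard : z l - m l ≤ ((n : ℝ) - 1) * δ := by
      have hsum_xm : ∑ l', (x l' - m l') < 0 := by
        have hsplit : ∑ l', (x l' - m l') =
            (x kk - m kk) + ∑ l' ∈ Finset.univ.erase kk, (x l' - m l') :=
          (Finset.add_sum_erase Finset.univ (fun l' => x l' - m l') (Finset.mem_univ kk)).symm
        have hbound : ∑ l' ∈ Finset.univ.erase kk, (x l' - m l') ≤
            ((Finset.univ.erase kk).card : ℝ) * δ := by
          calc ∑ l' ∈ Finset.univ.erase kk, (x l' - m l')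
              ≤ ∑ _l' ∈ Finset.univ.erase kk, δ := by
                apply Finset.sum_le_sum; intro i _; have := h1 i; linarith
            _ = ((Finset.univ.erase kk).card : ℝ) * δ := by
                rw [Finset.sum_const, nsmul_eq_mul]
        have hcard : ((Finset.univ.erase kk).card : ℝ) = (n : ℝ) - 1 := by
          rw [Finset.card_erase_of_mem (Finset.mem_univ kk)]
          simp [Finset.card_univ]
          have : 1 ≤ n := by omega
          push_cast [Nat.cast_sub this]
          ring
        have hkk' : x kk - m kk < -(((n : ℝ) - 1) * δ) := by linarith
        rw [hcard] at hbound
        rw [hsplit]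
        linarith
      have hzl : ∑ l', z l' - z l = ∑ l' ∈ Finset.univ.erase l, z l' := by
        have := Finset.add_sum_erase Finset.univ z (Finset.mem_univ l)
        linarith
      have hml : ∑ l', m l' - m l = ∑ l' ∈ Finset.univ.erase l, m l' := by
        have := Finset.add_sum_erase Finset.univ m (Finset.mem_univ l)
        linarith
      have herase : ∑ l' ∈ Finset.univ.erase l, m l' ≤
          ∑ l' ∈ Finset.univ.erase l, z l' + ((Finset.univ.erase l).card : ℝ) * δ := by
        have : ∑ l' ∈ Finset.univ.erase l, m l' ≤ ∑ l' ∈ Finset.univ.erase l, (z l' + δ) :=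
          Finset.sum_le_sum (fun i _ => h2 i)
        rw [Finset.sum_add_distrib, Finset.sum_const, nsmul_eq_mul] at this
        exact this
      have hcard : ((Finset.univ.erase l).card : ℝ) = (n : ℝ) - 1 := by
        rw [Finset.card_erase_of_mem (Finset.mem_univ l)]
        simp [Finset.card_univ]
        have : 1 ≤ n := by omega
        push_cast [Nat.cast_sub this]
        ring
      rw [hcard] at herase
      have hsx : ∑ l', (x l' - m l') = ∑ l', x l' - ∑ l', m l' := by
        rw [Finset.sum_sub_distrib]
      linarith
    exact ⟨by linarith, by have := h2 l; linarith⟩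

/-- Schröder–Bernstein preserving a relation. -/
lemma csb_rel {α β : Type} (r : α → β → Prop) (f : α → β) (hf : Function.Injective f)
    (hfr : ∀ a, r a (f a)) (g : β → α) (hg : Function.Injective g)
    (hgr : ∀ b, r (g b) b) :
    ∃ e : α ≃ β, ∀ a, r a (e a) := by
  classical
  cases' isEmpty_or_nonempty β with hβ hβ
  · have : IsEmpty α := Function.isEmpty f
    exact ⟨(Equiv.equivEmpty α).trans (Equiv.equivEmpty β).symm, fun a => (IsEmpty.false a).elim⟩
  set F : Set α →o Set α :=
    { toFun := fun s => (g '' (f '' s)ᶜ)ᶜ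
      monotone' := fun s t hst =>
        compl_subset_compl.mpr <| image_mono <| compl_subset_compl.mpr <| image_mono hst }
  set s : Set α := F.lfp
  have hs : (g '' (f '' s)ᶜ)ᶜ = s := F.map_lfp
  have hns : g '' (f '' s)ᶜ = sᶜ := compl_injective (by simp [hs])
  set g' := invFun g
  have g'g : LeftInverse g' g := leftInverse_invFun hg
  have hg'ns : g' '' sᶜ = (f '' s)ᶜ := by rw [← hns, g'g.image_image]
  set h : α → β := s.piecewise f g'
  have hsurj : Surjective h := by rw [← range_eq_univ, range_piecewise, hg'ns, union_compl_self]
  have hinj : Injective h := by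
    refine (injective_piecewise_iff _).2 ⟨hf.injOn, ?_, ?_⟩
    · intro x hx y hy hxy
      obtain ⟨x', _, rfl⟩ : x ∈ g '' (f '' s)ᶜ := by rwa [hns]
      obtain ⟨y', _, rfl⟩ : y ∈ g '' (f '' s)ᶜ := by rwa [hns]
      rw [g'g _, g'g _] at hxy
      rw [hxy]
    · intro x hx y hy hxy
      obtain ⟨y', hy', rfl⟩ : y ∈ g '' (f '' s)ᶜ := by rwa [hns]
      rw [g'g _] at hxy
      exact hy' ⟨x, hx, hxy⟩
  refine ⟨Equiv.ofBijective h ⟨hinj, hsurj⟩, ?_⟩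
  intro a
  show r a (s.piecewise f g' a)
  by_cases ha : a ∈ s
  · rw [Set.piecewise_eq_of_mem _ _ _ ha]; exact hfr a
  · rw [Set.piecewise_eq_of_notMem _ _ _ ha]
    have : a ∈ g '' (f '' s)ᶜ := by rwa [hns]
    obtain ⟨b, _, rfl⟩ := this
    rw [g'g b]
    exact hgr b

end FreeStab
namespace FreeStab

open DirectSum

attribute [local instance] Classical.propDecidable

variable {k : Type} [Field k] {n : ℕ}

abbrev Pt (n : ℕ) := Fin n → ℝ

/-- Translation of a point. -/
def tp (δ : ℝ) (p : Pt n) : Pt n := fun l => p l + δ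

lemma tp_mono {δ : ℝ} {p q : Pt n} (h : p ≤ q) : tp δ p ≤ tp δ q :=
  fun l => by show p l + δ ≤ q l + δ; linarith [h l]

lemma le_tp {δ : ℝ} (hδ : 0 ≤ δ) (p : Pt n) : p ≤ tp δ p :=
  fun l => by simp only [tp]; linarith

/-- The coordinate projection as a linear map. -/
def cvL (B : Barcode n) (p : Pt n) (i : B.ι) :
    (⨁ i, ↥(objSub k (B.I i) p)) →ₗ[k] k :=
  (objSub k (B.I i) p).subtype.comp (DirectSum.component k B.ι _ i)

lemma cvL_apply (B : Barcode n) (p : Pt n) (i : B.ι) (x : ⨁ i, ↥(objSub k (B.I i) p)) :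
    cvL B p i x = ↑(x i) := rfl

lemma objSub_eq_bot {B : Barcode n} {p : Pt n} {i : B.ι} (h : p ∉ B.I i) :
    objSub k (B.I i) p = ⊥ := by rw [objSub, if_neg h]

lemma cv_zero_of_not_mem {B : Barcode n} {p : Pt n} {i : B.ι}
    (x : ⨁ i, ↥(objSub k (B.I i) p)) (h : p ∉ B.I i) : cvL B p i x = 0 := by
  have h2 : (↑(x i) : k) ∈ (⊥ : Submodule k k) := (objSub_eq_bot h).le (x i).2
  rw [Submodule.mem_bot] at h2
  simpa [cvL_apply] using h2

lemma comp_zero_iff {B : Barcode n} {p : Pt n} {i : B.ι}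
    (x : ⨁ i, ↥(objSub k (B.I i) p)) : x i = 0 ↔ cvL B p i x = 0 := by
  rw [cvL_apply]
  exact ⟨fun h => by rw [h]; rfl, fun h => Subtype.ext h⟩

lemma mem_of_cv_ne {B : Barcode n} {p : Pt n} {i : B.ι}
    (x : ⨁ i, ↥(objSub k (B.I i) p)) (h : cvL B p i x ≠ 0) : p ∈ B.I i := by
  by_contra hc
  exact h (cv_zero_of_not_mem x hc)

lemma cv_ext {B : Barcode n} {p : Pt n} {x y : ⨁ i, ↥(objSub k (B.I i) p)}
    (h : ∀ i, cvL B p i x = cvL B p i y) : x = y :=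
  DFinsupp.ext fun i => Subtype.ext (h i)

/-- Generator of the `i`-th summand at a point (zero off the interval). -/
def gen (B : Barcode n) (i : B.ι) (p : Pt n) :
    ⨁ i, ↥(objSub k (B.I i) p) :=
  if h : p ∈ B.I i then
    DirectSum.lof k B.ι (fun i => ↥(objSub k (B.I i) p)) i ⟨1, by simp [objSub, h]⟩
  else 0

lemma cv_gen (B : Barcode n) (i i' : B.ι) (p : Pt n) (h : p ∈ B.I i) :
    cvL B p i' (gen B i p) = if i' = i then (1 : k) else 0 := by
  rw [gen, dif_pos h]
  rcases eq_or_ne i' i with rfl | hne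
  · rw [if_pos rfl, cvL_apply, DirectSum.lof_apply]
  · rw [if_neg hne, cvL_apply]
    have : (DirectSum.lof k B.ι (fun i => ↥(objSub k (B.I i) p)) i ⟨1, by simp [objSub, h]⟩) i'
        = 0 := DFinsupp.single_eq_of_ne (fun hh => hne hh)
    rw [this]; rfl

lemma of_eq_smul_gen {B : Barcode n} {p : Pt n} (x : ⨁ i, ↥(objSub k (B.I i) p))
    (i : B.ι) (h : p ∈ B.I i) :
    DirectSum.of (fun i => ↥(objSub k (B.I i) p)) i (x i) = cvL B p i x • gen B i p := by
  rw [gen, dif_pos h, ← LinearMap.map_smul, ← DirectSum.lof_eq_of k]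
  congr 1
  apply Subtype.ext
  simp [cvL_apply]

lemma apply_eq_sum {B : Barcode n} {p : Pt n} {V : Type} [AddCommGroup V] [Module k V]
    (L : (⨁ i, ↥(objSub k (B.I i) p)) →ₗ[k] V) (x : ⨁ i, ↥(objSub k (B.I i) p)) :
    L x = ∑ i ∈ x.support, cvL B p i x • L (gen B i p) := by
  conv_lhs => rw [← DirectSum.sum_support_of (x := x)]
  rw [map_sum]
  apply Finset.sum_congr rfl
  intro i hi
  have hmem : p ∈ B.I i := by
    by_contra hc
    have := cv_zero_of_not_mem x hc
    rw [cvL_apply] at this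
    exact (DFinsupp.mem_support_iff.mp hi) (Subtype.ext this)
  rw [of_eq_smul_gen x i hmem, map_smul]

end FreeStab
namespace FreeStab

open DirectSum

attribute [local instance] Classical.propDecidable

variable {k : Type} [Field k] {n : ℕ}

lemma interval_map_val {I : Set (Pt n)} (hc : IsConvex I) {p q : Pt n} (η : p ⟶ q)
    (x : ↥(objSub k I p)) :
    (objSub k I q).subtype (((intervalModule k I hc).map η) x) =
      if p ∈ I ∧ q ∈ I then (objSub k I p).subtype x else 0 := by
  have hmap : (intervalModule k I hc).map η =
      (if hpq : p ∈ I ∧ q ∈ I then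
        ModuleCat.ofHom (({ toFun := fun x => ⟨(x : k), by simp [objSub, hpq.2]⟩
                            map_add' := by intros; rfl
                            map_smul' := by intros; rfl } :
          ↥(objSub k I p) →ₗ[k] ↥(objSub k I q)))
      else 0) := rfl
  rw [hmap]
  by_cases hpq : p ∈ I ∧ q ∈ I
  · rw [dif_pos hpq, if_pos hpq]
    rfl
  · rw [dif_neg hpq, if_neg hpq]
    rfl

lemma cv_map {B : Barcode n} {p q : Pt n} (η : p ⟶ q) (x : ⨁ i, ↥(objSub k (B.I i) p))
    (i : B.ι) :
    cvL B q i (((B.module k).map η) x) =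
      if q ∈ B.I i then cvL B p i x else 0 := by
  have happ : cvL B q i (((B.module k).map η) x) =
      (objSub k (B.I i) q).subtype
        (((intervalModule k (B.I i) (B.conv i)).map η) (x i)) := rfl
  rw [happ, interval_map_val (B.conv i), cvL_apply]
  by_cases hq : q ∈ B.I i
  · by_cases hp : p ∈ B.I i
    · rw [if_pos ⟨hp, hq⟩, if_pos hq]
      rfl
    · rw [if_neg (fun hh => hp hh.1), if_pos hq]
      have h2 : (↑(x i) : k) ∈ (⊥ : Submodule k k) := (objSub_eq_bot hp).le (x i).2
      rw [Submodule.mem_bot] at h2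
      exact h2.symm
  · rw [if_neg (fun hh => hq hh.2), if_neg hq]

end FreeStab
namespace FreeStab

open DirectSum

attribute [local instance] Classical.propDecidable

variable {k : Type} [Field k] {n : ℕ}

lemma app_naturality {B C : Barcode n} {δ : ℝ}
    (f : B.module k ⟶ transl n δ ⋙ C.module k) {p q : Pt n} (η : p ⟶ q)
    (x : ⨁ i, ↥(objSub k (B.I i) p)) :
    f.app q (((B.module k).map η) x)
      = ((C.module k).map ((transl n δ).map η)) (f.app p x) := by
  have h := f.naturality η
  have h2 := congrArg (fun (L : (B.module k).obj p ⟶ (transl n δ ⋙ C.module k).obj q) => L x) h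
  exact h2

lemma map_gen {B : Barcode n} {p q : Pt n} (η : p ⟶ q) (i : B.ι)
    (hp : p ∈ B.I i) (hq : q ∈ B.I i) :
    ((B.module k).map η) (gen B i p) = gen B i q := by
  apply cv_ext
  intro i'
  rw [cv_map η (gen B i p) i', cv_gen B i i' q hq]
  by_cases hqi : q ∈ B.I i'
  · rw [if_pos hqi, cv_gen B i i' p hp]
  · rw [if_neg hqi, if_neg (fun hh : i' = i => hqi (hh ▸ hq))]

/-- The matrix entry of a natural transformation, measured at basepoint `a i`. -/
def FM {B C : Barcode n} {δ : ℝ} (f : B.module k ⟶ transl n δ ⋙ C.module k)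
    (a : B.ι → Pt n) (j : C.ι) (i : B.ι) : k :=
  cvL C (tp δ (a i)) j (f.app (a i) (gen B i (a i)))

lemma FM_zero {B C : Barcode n} {δ : ℝ} (f : B.module k ⟶ transl n δ ⋙ C.module k)
    (a : B.ι → Pt n) (j : C.ι) (i : B.ι) (h : tp δ (a i) ∉ C.I j) : FM f a j i = 0 :=
  cv_zero_of_not_mem _ h

lemma cv_app {B C : Barcode n} {δ : ℝ} (f : B.module k ⟶ transl n δ ⋙ C.module k)
    (a : B.ι → Pt n) (i : B.ι) (haI : a i ∈ B.I i) {p : Pt n} (hp : a i ≤ p)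
    (hpI : p ∈ B.I i) (j : C.ι)
    (hCup : ∀ q q' : Pt n, q ∈ C.I j → q ≤ q' → q' ∈ C.I j) :
    cvL C (tp δ p) j (f.app p (gen B i p)) = FM f a j i := by
  have hgen : ((B.module k).map (homOfLE hp)) (gen B i (a i)) = gen B i p :=
    map_gen (homOfLE hp) i haI hpI
  have hnat := app_naturality f (homOfLE hp) (gen B i (a i))
  rw [hgen] at hnat
  rw [hnat]
  have hcv := cv_map (B := C) ((transl n δ).map (homOfLE hp))
    (f.app (a i) (gen B i (a i))) j
  refine hcv.trans ?_
  by_cases hm : (transl n δ).obj p ∈ C.I j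
  · rw [if_pos hm]; rfl
  · rw [if_neg hm]
    by_contra hne
    have h0 : FM f a j i ≠ 0 := fun hh => hne hh.symm
    have hmem := mem_of_cv_ne _ h0
    exact hm (hCup _ _ hmem (tp_mono hp))

end FreeStab
namespace FreeStab

open DirectSum

attribute [local instance] Classical.propDecidable

variable {k : Type} [Field k] {n : ℕ}

lemma comp_identity {B C : Barcode n} {δ : ℝ} (hδ : 0 ≤ δ)
    (f : B.module k ⟶ transl n δ ⋙ C.module k)
    (g : C.module k ⟶ transl n δ ⋙ B.module k)
    (hfg : ∀ p : Pt n, f.app p ≫ g.app (fun l => p l + δ) =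
      (B.module k).map (homOfLE (show p ≤ fun l => p l + δ + δ from
        fun l => by show p l ≤ p l + δ + δ; linarith)))
    (a : B.ι → Pt n) (hBa : ∀ i, B.I i = Set.Ici (a i))
    (b : C.ι → Pt n) (hCb : ∀ j, C.I j = Set.Ici (b j))
    (i i' : B.ι) (T : Finset C.ι)
    (hT : ∀ j, FM f a j i ≠ 0 → j ∈ T) :
    ∑ j ∈ T, FM g b i' j * FM f a j i = if i' = i then 1 else 0 := by
  have hpI : a i ∈ B.I i := by rw [hBa i]; exact Set.self_mem_Ici
  set P : Pt n := tp δ (a i) with hP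
  set y : ⨁ j, ↥(objSub k (C.I j) P) := f.app (a i) (gen B i (a i)) with hy
  have hcvy : ∀ j, cvL C P j y = FM f a j i := fun j => rfl
  set L : (⨁ j, ↥(objSub k (C.I j) P)) →ₗ[k] k :=
    (cvL B (tp δ P) i').comp
      ((g.app P).hom : (⨁ j, ↥(objSub k (C.I j) P)) →ₗ[k]
        (⨁ i'', ↥(objSub k (B.I i'') (tp δ P)))) with hL
  -- way 1 : sum formula
  have hsupp : y.support ⊆ T := by
    intro j hj
    exact hT j (fun hh => (DFinsupp.mem_support_iff.mp hj)
      (Subtype.ext ((hcvy j) ▸ hh : cvL C P j y = 0)))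
  have hgenval : ∀ j ∈ y.support, L (gen C j P) = FM g b i' j := by
    intro j hj
    have hjP : P ∈ C.I j := by
      apply mem_of_cv_ne (i := j) y
      rw [hcvy j]
      intro hh
      exact (DFinsupp.mem_support_iff.mp hj) (Subtype.ext (hcvy j ▸ hh : cvL C P j y = 0))
    have hbj : b j ∈ C.I j := by rw [hCb j]; exact Set.self_mem_Ici
    have hble : b j ≤ P := by
      have := hjP; rw [hCb j] at this; exact this
    exact cv_app g b j hbj hble hjP i'
      (fun q q' hq hle => by
        rw [hBa i'] at hq ⊢; exact le_trans hq hle)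
  have way1 : L y = ∑ j ∈ T, FM g b i' j * FM f a j i := by
    rw [apply_eq_sum L y]
    rw [Finset.sum_subset hsupp]
    · apply Finset.sum_congr rfl
      intro j hj
      by_cases hjs : j ∈ y.support
      · rw [hgenval j hjs, hcvy j, smul_eq_mul, mul_comm]
      · have h0 : cvL C P j y = 0 := by
          rw [cvL_apply, DFinsupp.notMem_support_iff.mp hjs]; rfl
        rw [← hcvy j, h0, zero_smul, mul_zero]
    · intro j hjT hjs
      have h0 : cvL C P j y = 0 := by
        rw [cvL_apply, DFinsupp.notMem_support_iff.mp hjs]; rfl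
      rw [h0, zero_smul]
  -- way 2 : interleaving identity
  have way2 : L y = if i' = i then 1 else 0 := by
    set GG : ⨁ i'', ↥(objSub k (B.I i'') (a i)) := gen B i (a i) with hGG
    have happ : L y = cvL B (tp δ P) i'
        ((f.app (a i) ≫ g.app (fun l => a i l + δ)) (GG)) := rfl
    have hcomp0 : (f.app (a i) ≫ g.app (fun l => a i l + δ)) (GG) =
        ((B.module k).map (homOfLE (show a i ≤ fun l => a i l + δ + δ from
          fun l => by show a i l ≤ a i l + δ + δ; linarith))) (GG) :=
      by rw [hfg (a i)]; rfl
    have hcomp : cvL B (tp δ P) i'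
          ((f.app (a i) ≫ g.app (fun l => a i l + δ)) (GG)) =
        cvL B (tp δ P) i'
          (((B.module k).map (homOfLE (show a i ≤ fun l => a i l + δ + δ from
            fun l => by show a i l ≤ a i l + δ + δ; linarith))) (GG)) := by
      rw [hcomp0]
    have hmap := cv_map (B := B)
      (homOfLE (show a i ≤ fun l => a i l + δ + δ from
        fun l => by show a i l ≤ a i l + δ + δ; linarith)) (GG) i'
    have hfin : cvL B (tp δ P) i'
        (((B.module k).map (homOfLE (show a i ≤ fun l => a i l + δ + δ from
          fun l => by show a i l ≤ a i l + δ + δ; linarith))) (GG))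
        = if i' = i then 1 else 0 := by
      refine hmap.trans ?_
      by_cases hm : (fun l => a i l + δ + δ) ∈ B.I i'
      · rw [if_pos hm, cv_gen B i i' (a i) hpI]
      · rw [if_neg hm]
        rcases eq_or_ne i' i with rfl | hne
        · exfalso
          apply hm
          rw [hBa i']
          intro l
          show a i' l ≤ a i' l + δ + δ
          linarith
        · rw [if_neg hne]
    exact happ.trans (hcomp.trans hfin)
  rw [← way1, way2]

end FreeStab
namespace FreeStab

open DirectSum

attribute [local instance] Classical.propDecidable

variable {k : Type} [Field k] {n : ℕ}

lemma pfd_finite {B : Barcode n} (hpfd : B.pfd k) (x : Pt n) :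
    {i | x ∈ B.I i}.Finite := by
  by_contra hinf
  have hinf : {i | x ∈ B.I i}.Infinite := hinf
  have hfin : Module.Finite k (⨁ i, ↥(objSub k (B.I i) x)) := hpfd x
  set d := Module.finrank k (⨁ i, ↥(objSub k (B.I i) x)) with hd
  obtain ⟨t, hts, htc⟩ := hinf.exists_subset_card_eq (d + 1)
  have hli : LinearIndependent k (fun it : ↥t => gen (k := k) B ↑it x) := by
    rw [linearIndependent_iff']
    intro s gc hsum i0 hi0
    have hcv := congrArg (fun yy => cvL (k := k) B x ↑i0 yy) hsum
    simp only [map_sum, map_smul, map_zero] at hcv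
    have hterm : ∀ i : ↥t, gc i • cvL (k := k) B x ↑i0 (gen B ↑i x) =
        if i0 = i then gc i else 0 := by
      intro i
      have hmem : x ∈ B.I ↑i := hts i.2
      rw [cv_gen B ↑i ↑i0 x hmem, smul_eq_mul, mul_ite, mul_one, mul_zero]
      by_cases hh : i0 = i
      · rw [if_pos hh, if_pos (by rw [hh])]
      · rw [if_neg hh, if_neg (fun hc => hh (Subtype.coe_injective hc))]
    rw [Finset.sum_congr rfl (fun i _ => hterm i)] at hcv
    rw [Finset.sum_ite_eq s i0 gc] at hcv
    rw [if_pos hi0] at hcv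
    exact hcv
  have hcard := hli.fintype_card_le_finrank
  rw [Fintype.card_coe, htc, ← hd] at hcard
  omega

end FreeStab
namespace FreeStab

open DirectSum

attribute [local instance] Classical.propDecidable

variable {k : Type} [Field k] {n : ℕ}

lemma hall_aux {I J : Type} {δ : ℝ} (hδ : 0 ≤ δ) (hn : 2 ≤ n)
    (a : I → Pt n) (b : J → Pt n)
    (Fm : J → I → k) (Gm : I → J → k)
    (hF : ∀ j i, Fm j i ≠ 0 → ∀ l, b j l ≤ a i l + δ)
    (hG : ∀ i j, Gm i j ≠ 0 → ∀ l, a i l ≤ b j l + δ)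
    (hsupp : ∀ i, {j | Fm j i ≠ 0}.Finite)
    (hP3 : ∀ (i i' : I) (T : Finset J), (∀ j, Fm j i ≠ 0 → j ∈ T) →
      ∑ j ∈ T, Gm i' j * Fm j i = if i' = i then 1 else 0)
    (hμ : ∀ i, {j | ∀ l, |a i l - b j l| ≤ ((n : ℝ) - 1) * δ}.Finite) :
    ∃ fm : I → J, Function.Injective fm ∧
      ∀ i, ∀ l, |a i l - b (fm i) l| ≤ ((n : ℝ) - 1) * δ := by
  classical
  set μ : I → Finset J := fun i => (hμ i).toFinset with hμdef
  have hall : ∀ s : Finset I, s.card ≤ (s.biUnion μ).card := by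
    intro s
    by_contra hlt
    push_neg at hlt
    set W := s.biUnion μ with hW
    set Φ : (↥s → k) →ₗ[k] (↥W → k) :=
      { toFun := fun v w => ∑ i ∈ s.attach, Fm ↑w ↑i * v i
        map_add' := by
          intro v1 v2; funext w
          simp only [Pi.add_apply, mul_add, Finset.sum_add_distrib]
        map_smul' := by
          intro c v; funext w
          simp only [Pi.smul_apply, smul_eq_mul, RingHom.id_apply, Finset.mul_sum]
          apply Finset.sum_congr rfl; intros; ring } with hΦ
    have hker : ∃ v : ↥s → k, v ≠ 0 ∧ Φ v = 0 := by
      by_contra hc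
      push_neg at hc
      have hinj : Function.Injective Φ := by
        rw [← LinearMap.ker_eq_bot, LinearMap.ker_eq_bot']
        intro m hm
        by_contra hm0
        exact hc m hm0 hm
      have hle := LinearMap.finrank_le_finrank_of_injective hinj
      rw [Module.finrank_fintype_fun_eq_card, Module.finrank_fintype_fun_eq_card,
        Fintype.card_coe, Fintype.card_coe] at hle
      omega
    obtain ⟨v, hv0, hv⟩ := hker
    have hsuppv : (s.attach.filter (fun i => v i ≠ 0)).Nonempty := by
      rw [Finset.filter_nonempty_iff]
      by_contra hc
      push_neg at hc
      apply hv0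
      funext i
      exact hc i (Finset.mem_attach s i)
    obtain ⟨istar, histar, hmax⟩ :=
      Finset.exists_max_image _ (fun i : ↥s => ∑ l, a (↑i) l) hsuppv
    rw [Finset.mem_filter] at histar
    have hvstar : v istar ≠ 0 := histar.2
    set T : Finset J := s.attach.biUnion (fun i => (hsupp ↑i).toFinset) with hT
    have hTmem : ∀ (i : ↥s) (j : J), Fm j ↑i ≠ 0 → j ∈ T := by
      intro i j hj
      rw [hT, Finset.mem_biUnion]
      exact ⟨i, Finset.mem_attach s i, (hsupp ↑i).mem_toFinset.mpr hj⟩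
    -- the sum computation
    have hstep1 : v istar = ∑ i' ∈ s.attach, (∑ j ∈ T, Gm ↑istar j * Fm j ↑i') * v i' := by
      have : ∀ i' ∈ s.attach, (∑ j ∈ T, Gm ↑istar j * Fm j ↑i') * v i'
          = (if istar = i' then v i' else 0) := by
        intro i' _
        rw [hP3 ↑i' ↑istar T (hTmem i')]
        by_cases hh : istar = i'
        · rw [if_pos hh, if_pos (by rw [hh]), one_mul]
        · rw [if_neg hh, if_neg (fun hc => hh (Subtype.coe_injective hc)), zero_mul]
      rw [Finset.sum_congr rfl this, Finset.sum_ite_eq s.attach istar v,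
        if_pos (Finset.mem_attach s istar)]
    have hstep2 : v istar = ∑ j ∈ T, Gm ↑istar j * (∑ i' ∈ s.attach, Fm j ↑i' * v i') := by
      rw [hstep1]
      calc ∑ i' ∈ s.attach, (∑ j ∈ T, Gm ↑istar j * Fm j ↑i') * v i'
          = ∑ i' ∈ s.attach, ∑ j ∈ T, Gm ↑istar j * Fm j ↑i' * v i' := by
            apply Finset.sum_congr rfl; intros; rw [Finset.sum_mul]
        _ = ∑ j ∈ T, ∑ i' ∈ s.attach, Gm ↑istar j * Fm j ↑i' * v i' := Finset.sum_comm
        _ = ∑ j ∈ T, Gm ↑istar j * ∑ i' ∈ s.attach, Fm j ↑i' * v i' := by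
            apply Finset.sum_congr rfl; intros; rw [Finset.mul_sum]
            apply Finset.sum_congr rfl; intros; ring
    have hzero : ∀ j ∈ T, Gm ↑istar j * (∑ i' ∈ s.attach, Fm j ↑i' * v i') = 0 := by
      intro j hjT
      by_cases hjW : j ∈ W
      · have h0 : (∑ i' ∈ s.attach, Fm j ↑i' * v i') = 0 := congrFun hv ⟨j, hjW⟩
        rw [h0, mul_zero]
      · by_contra hne
        have hGne : Gm ↑istar j ≠ 0 := fun h0 => hne (by rw [h0, zero_mul])
        have hwne : (∑ i' ∈ s.attach, Fm j ↑i' * v i') ≠ 0 :=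
          fun h0 => hne (by rw [h0, mul_zero])
        obtain ⟨i', hi', hne'⟩ := Finset.exists_ne_zero_of_sum_ne_zero hwne
        have hFne : Fm j ↑i' ≠ 0 := fun h0 => hne' (by rw [h0, zero_mul])
        have hvne : v i' ≠ 0 := fun h0 => hne' (by rw [h0, mul_zero])
        have hsum3 : ∑ l, a (↑i') l ≤ ∑ l, a (↑istar) l :=
          hmax i' (Finset.mem_filter.mpr ⟨hi', hvne⟩)
        rcases key_lemma hn hδ (a ↑istar) (b j) (a ↑i')
          (fun l => hG ↑istar j hGne l) (fun l => hF j ↑i' hFne l) hsum3 with hclose | hclose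
        · apply hjW
          refine Finset.mem_biUnion.mpr ⟨↑istar, istar.2, ?_⟩
          rw [hμdef]
          rw [(hμ ↑istar).mem_toFinset]
          intro l; rw [abs_sub_comm]; exact hclose l
        · apply hjW
          refine Finset.mem_biUnion.mpr ⟨↑i', (i' : ↥s).2, ?_⟩
          rw [hμdef]
          rw [(hμ (↑i' : I)).mem_toFinset]
          intro l; rw [abs_sub_comm]; exact hclose l
    rw [Finset.sum_congr rfl hzero, Finset.sum_const, smul_zero] at hstep2
    exact hvstar hstep2
  obtain ⟨fm, hfminj, hfmmem⟩ :=
    (Finset.all_card_le_biUnion_card_iff_exists_injective μ).mp hall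
  refine ⟨fm, hfminj, fun i => ?_⟩
  have := hfmmem i
  rw [hμdef, (hμ i).mem_toFinset] at this
  exact this

end FreeStab
namespace FreeStab

open DirectSum

attribute [local instance] Classical.propDecidable

variable {k : Type} [Field k] {n : ℕ}

/-- The pointwise component of the canonical morphism `𝕀^I ⟶ 𝕀^J(ε)`. -/
def ivlApp (I J : Set (Pt n)) (ε : ℝ)
    (h : ∀ p : Pt n, p ∈ I → (fun l => p l + ε) ∈ J) (p : Pt n) :
    ↥(objSub k I p) →ₗ[k] ↥(objSub k J (fun l => p l + ε)) :=
  if hp : p ∈ I then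
    { toFun := fun x => ⟨(x : k), by simp [objSub, h p hp]⟩
      map_add' := fun _ _ => rfl
      map_smul' := fun _ _ => rfl }
  else 0

lemma ivlApp_val (I J : Set (Pt n)) (ε : ℝ)
    (h : ∀ p : Pt n, p ∈ I → (fun l => p l + ε) ∈ J) (p : Pt n) (x : ↥(objSub k I p)) :
    (objSub k J (fun l => p l + ε)).subtype (ivlApp I J ε h p x) =
      if p ∈ I then (objSub k I p).subtype x else 0 := by
  rw [ivlApp]
  by_cases hp : p ∈ I
  · rw [dif_pos hp, if_pos hp]; rfl
  · rw [dif_neg hp, if_neg hp]; rfl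

/-- The canonical natural transformation `𝕀^I ⟶ 𝕀^J(ε)`. -/
def ivlHom (I J : Set (Pt n)) (hIc : IsConvex I) (hJc : IsConvex J) (ε : ℝ)
    (hIup : ∀ p q : Pt n, p ∈ I → p ≤ q → q ∈ I)
    (h : ∀ p : Pt n, p ∈ I → (fun l => p l + ε) ∈ J) :
    intervalModule k I hIc ⟶ transl n ε ⋙ intervalModule k J hJc where
  app p := ModuleCat.ofHom (ivlApp I J ε h p)
  naturality := by
    intro p q η
    apply ModuleCat.hom_ext
    apply LinearMap.ext
    intro x
    apply Subtype.ext
    have hA : (objSub k J (fun l => q l + ε)).subtype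
        ((ivlApp I J ε h q) (((intervalModule k I hIc).map η) x)) =
        if q ∈ I then (objSub k I q).subtype (((intervalModule k I hIc).map η) x) else 0 :=
      ivlApp_val I J ε h q _
    have hA2 : (objSub k I q).subtype (((intervalModule k I hIc).map η) x) =
        if p ∈ I ∧ q ∈ I then (objSub k I p).subtype x else 0 :=
      interval_map_val hIc η x
    have hB : (objSub k J (fun l => q l + ε)).subtype
        (((intervalModule k J hJc).map ((transl n ε).map η)) ((ivlApp I J ε h p) x)) =
        if (fun l => p l + ε) ∈ J ∧ (fun l => q l + ε) ∈ J then
          (objSub k J (fun l => p l + ε)).subtype ((ivlApp I J ε h p) x) else 0 :=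
      interval_map_val hJc ((transl n ε).map η) _
    have hB2 : (objSub k J (fun l => p l + ε)).subtype ((ivlApp I J ε h p) x) =
        if p ∈ I then (objSub k I p).subtype x else 0 :=
      ivlApp_val I J ε h p x
    show (objSub k J (fun l => q l + ε)).subtype
        ((ivlApp I J ε h q) (((intervalModule k I hIc).map η) x)) =
      (objSub k J (fun l => q l + ε)).subtype
        (((intervalModule k J hJc).map ((transl n ε).map η)) ((ivlApp I J ε h p) x))
    rw [hA, hA2, hB, hB2]
    by_cases hp : p ∈ I
    · have hq : q ∈ I := hIup p q hp (leOfHom η)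
      rw [if_pos hq, if_pos ⟨hp, hq⟩, if_pos ⟨h p hp, h q hq⟩, if_pos hp]
    · have : ¬(p ∈ I ∧ q ∈ I) := fun hc => hp hc.1
      rw [if_neg this, ite_self, if_neg hp, ite_self]

/-- Interval modules of `ε`-close free intervals are `ε`-interleaved. -/
lemma interval_interleaved {ε : ℝ} (hε : 0 ≤ ε) (I J : Set (Pt n))
    (hIc : IsConvex I) (hJc : IsConvex J) (a b : Pt n)
    (hI : I = Set.Ici a) (hJ : J = Set.Ici b) (hab : ∀ l, |a l - b l| ≤ ε) :
    Interleaved k ε (intervalModule k I hIc) (intervalModule k J hJc) := by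
  have hIup : ∀ p q : Pt n, p ∈ I → p ≤ q → q ∈ I := by
    intro p q hp hle; rw [hI] at hp ⊢; exact le_trans hp hle
  have hJup : ∀ p q : Pt n, p ∈ J → p ≤ q → q ∈ J := by
    intro p q hp hle; rw [hJ] at hp ⊢; exact le_trans hp hle
  have hIJ : ∀ p : Pt n, p ∈ I → (fun l => p l + ε) ∈ J := by
    intro p hp
    rw [hI] at hp; rw [hJ]
    intro l
    have h1 := hp l
    have h2 := abs_le.mp (hab l)
    show b l ≤ p l + ε
    linarith [h2.1, h2.2]
  have hJI : ∀ p : Pt n, p ∈ J → (fun l => p l + ε) ∈ I := by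
    intro p hp
    rw [hJ] at hp; rw [hI]
    intro l
    have h1 := hp l
    have h2 := abs_le.mp (hab l)
    show a l ≤ p l + ε
    linarith [h2.1, h2.2]
  refine ⟨hε, ivlHom I J hIc hJc ε hIup hIJ, ivlHom J I hJc hIc ε hJup hJI, ?_, ?_⟩
  · intro p
    apply ModuleCat.hom_ext
    apply LinearMap.ext
    intro x
    apply Subtype.ext
    have hA : (objSub k I (fun l => p l + ε + ε)).subtype
        ((ivlApp J I ε hJI (fun l => p l + ε)) ((ivlApp I J ε hIJ p) x)) =
        if (fun l => p l + ε) ∈ J then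
          (objSub k J (fun l => p l + ε)).subtype ((ivlApp I J ε hIJ p) x) else 0 :=
      ivlApp_val J I ε hJI _ _
    have hA2 : (objSub k J (fun l => p l + ε)).subtype ((ivlApp I J ε hIJ p) x) =
        if p ∈ I then (objSub k I p).subtype x else 0 :=
      ivlApp_val I J ε hIJ p x
    have hB : (objSub k I (fun l => p l + ε + ε)).subtype
        (((intervalModule k I hIc).map (homOfLE (show p ≤ fun l => p l + ε + ε from
          fun l => by show p l ≤ p l + ε + ε; linarith))) x) =
        if p ∈ I ∧ (fun l => p l + ε + ε) ∈ I then (objSub k I p).subtype x else 0 :=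
      interval_map_val hIc _ x
    show (objSub k I (fun l => p l + ε + ε)).subtype
        ((ivlApp J I ε hJI (fun l => p l + ε)) ((ivlApp I J ε hIJ p) x)) =
      (objSub k I (fun l => p l + ε + ε)).subtype
        (((intervalModule k I hIc).map (homOfLE (show p ≤ fun l => p l + ε + ε from
          fun l => by show p l ≤ p l + ε + ε; linarith))) x)
    rw [hA, hA2, hB]
    by_cases hp : p ∈ I
    · have h1 : (fun l => p l + ε) ∈ J := hIJ p hp
      have h2 : (fun l => p l + ε + ε) ∈ I :=
        hIup p _ hp (fun l => by show p l ≤ p l + ε + ε; linarith)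
      rw [if_pos h1, if_pos hp, if_pos ⟨hp, h2⟩]
    · have : ¬(p ∈ I ∧ (fun l => p l + ε + ε) ∈ I) := fun hc => hp hc.1
      rw [if_neg hp, ite_self, if_neg this]
  · intro p
    apply ModuleCat.hom_ext
    apply LinearMap.ext
    intro x
    apply Subtype.ext
    have hA : (objSub k J (fun l => p l + ε + ε)).subtype
        ((ivlApp I J ε hIJ (fun l => p l + ε)) ((ivlApp J I ε hJI p) x)) =
        if (fun l => p l + ε) ∈ I then
          (objSub k I (fun l => p l + ε)).subtype ((ivlApp J I ε hJI p) x) else 0 :=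
      ivlApp_val I J ε hIJ _ _
    have hA2 : (objSub k I (fun l => p l + ε)).subtype ((ivlApp J I ε hJI p) x) =
        if p ∈ J then (objSub k J p).subtype x else 0 :=
      ivlApp_val J I ε hJI p x
    have hB : (objSub k J (fun l => p l + ε + ε)).subtype
        (((intervalModule k J hJc).map (homOfLE (show p ≤ fun l => p l + ε + ε from
          fun l => by show p l ≤ p l + ε + ε; linarith))) x) =
        if p ∈ J ∧ (fun l => p l + ε + ε) ∈ J then (objSub k J p).subtype x else 0 :=
      interval_map_val hJc _ x
    show (objSub k J (fun l => p l + ε + ε)).subtype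
        ((ivlApp I J ε hIJ (fun l => p l + ε)) ((ivlApp J I ε hJI p) x)) =
      (objSub k J (fun l => p l + ε + ε)).subtype
        (((intervalModule k J hJc).map (homOfLE (show p ≤ fun l => p l + ε + ε from
          fun l => by show p l ≤ p l + ε + ε; linarith))) x)
    rw [hA, hA2, hB]
    by_cases hp : p ∈ J
    · have h1 : (fun l => p l + ε) ∈ I := hJI p hp
      have h2 : (fun l => p l + ε + ε) ∈ J :=
        hJup p _ hp (fun l => by show p l ≤ p l + ε + ε; linarith)
      rw [if_pos h1, if_pos hp, if_pos ⟨hp, h2⟩]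
    · have : ¬(p ∈ J ∧ (fun l => p l + ε + ε) ∈ J) := fun hc => hp hc.1
      rw [if_neg hp, ite_self, if_neg this]

end FreeStab
namespace FreeStab

open DirectSum

attribute [local instance] Classical.propDecidable

variable {k : Type} [Field k] {n : ℕ}

lemma main_matching (hn : 2 ≤ n) (δ : ℝ) (B C : Barcode n)
    (hB : IsFreeBarcode B) (hC : IsFreeBarcode C)
    (hBpfd : B.pfd k) (hCpfd : C.pfd k)
    (hI : Interleaved k δ (B.module k) (C.module k)) :
    Matched k (((n : ℝ) - 1) * δ) B C := by
  obtain ⟨hδ, f, g, hfg, hgf⟩ := hI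
  choose a ha using hB
  choose b hb using hC
  have hn1 : (1 : ℝ) ≤ (n : ℝ) - 1 := by
    have : (2 : ℝ) ≤ (n : ℝ) := by exact_mod_cast hn
    linarith
  have hε0 : 0 ≤ ((n : ℝ) - 1) * δ := by nlinarith
  -- direction B → C
  have hF : ∀ (j : C.ι) (i : B.ι), FM f a j i ≠ 0 → ∀ l, b j l ≤ a i l + δ := by
    intro j i hne l
    have hmem : tp δ (a i) ∈ C.I j := by
      by_contra hc
      exact hne (FM_zero f a j i hc)
    rw [hb j] at hmem
    exact hmem l
  have hG : ∀ (i : B.ι) (j : C.ι), FM g b i j ≠ 0 → ∀ l, a i l ≤ b j l + δ := by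
    intro i j hne l
    have hmem : tp δ (b j) ∈ B.I i := by
      by_contra hc
      exact hne (FM_zero g b i j hc)
    rw [ha i] at hmem
    exact hmem l
  have hsuppF : ∀ i : B.ι, {j : C.ι | FM f a j i ≠ 0}.Finite := by
    intro i
    apply Set.Finite.subset (pfd_finite hCpfd (tp δ (a i)))
    intro j hj
    by_contra hc
    exact hj (FM_zero f a j i hc)
  have hsuppG : ∀ j : C.ι, {i : B.ι | FM g b i j ≠ 0}.Finite := by
    intro j
    apply Set.Finite.subset (pfd_finite hBpfd (tp δ (b j)))
    intro i hi
    by_contra hc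
    exact hi (FM_zero g b i j hc)
  have hμC : ∀ i : B.ι, {j : C.ι | ∀ l, |a i l - b j l| ≤ ((n : ℝ) - 1) * δ}.Finite := by
    intro i
    apply Set.Finite.subset (pfd_finite hCpfd (tp (((n : ℝ) - 1) * δ) (a i)))
    intro j hj
    rw [Set.mem_setOf_eq, hb j]
    intro l
    have := abs_le.mp (hj l)
    show b j l ≤ a i l + ((n : ℝ) - 1) * δ
    linarith [this.1, this.2]
  have hμB : ∀ j : C.ι, {i : B.ι | ∀ l, |b j l - a i l| ≤ ((n : ℝ) - 1) * δ}.Finite := by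
    intro j
    apply Set.Finite.subset (pfd_finite hBpfd (tp (((n : ℝ) - 1) * δ) (b j)))
    intro i hi
    rw [Set.mem_setOf_eq, ha i]
    intro l
    have := abs_le.mp (hi l)
    show a i l ≤ b j l + ((n : ℝ) - 1) * δ
    linarith [this.1, this.2]
  obtain ⟨fm, hfm_inj, hfm⟩ := hall_aux hδ hn a b (FM f a) (FM g b) hF hG hsuppF
    (fun i i' T hT => comp_identity hδ f g hfg a ha b hb i i' T hT) hμC
  obtain ⟨gm, hgm_inj, hgm⟩ := hall_aux hδ hn b a (FM g b) (FM f a) hG hF hsuppG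
    (fun j j' T hT => comp_identity hδ g f hgf b hb a ha j j' T hT) hμB
  obtain ⟨e, he⟩ := csb_rel (fun i j => ∀ l, |a i l - b j l| ≤ ((n : ℝ) - 1) * δ)
    fm hfm_inj hfm gm hgm_inj
    (fun j l => by rw [abs_sub_comm]; exact hgm j l)
  refine ⟨hε0, Set.univ, Set.univ,
    (Equiv.Set.univ B.ι).trans (e.trans (Equiv.Set.univ C.ι).symm),
    fun i hi => absurd (Set.mem_univ i) hi,
    fun j hj => absurd (Set.mem_univ j) hj,
    fun i => ?_⟩
  exact interval_interleaved hε0 (B.I ↑i) (C.I (e ↑i)) (B.conv ↑i) (C.conv (e ↑i))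
    (a ↑i) (b (e ↑i)) (ha ↑i) (hb (e ↑i)) (he ↑i)

end FreeStab
/-- **Theorem 3.10.** If `M` and `N` are p.f.d. free `ℝⁿ`-persistence
modules (`n ≥ 2`) that are `δ`-interleaved, then there is an `(n−1)δ`-matching between
their barcodes; hence `d_B(M,N) ≤ (n−1)·d_I(M,N)`. -/
theorem free_stability
    (k : Type) [Field k] {n : ℕ} (hn : 2 ≤ n) (δ : ℝ)
    (B C : Barcode n) (hB : IsFreeBarcode B) (hC : IsFreeBarcode C)
    (hBpfd : B.pfd k) (hCpfd : C.pfd k)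
    (hI : Interleaved k δ (B.module k) (C.module k)) :
    Matched k (((n : ℝ) - 1) * δ) B C ∧
      dBot k B C ≤ ((n : ℝ≥0∞) - 1) * dInt k (B.module k) (C.module k) := by
  refine ⟨FreeStab.main_matching hn δ B C hB hC hBpfd hCpfd hI, ?_⟩
  have key : ∀ ε : ℝ, Interleaved k ε (B.module k) (C.module k) →
      Matched k (((n : ℝ) - 1) * ε) B C :=
    fun ε h => FreeStab.main_matching hn ε B C hB hC hBpfd hCpfd h
  have hn1 : (1 : ℝ) ≤ (n : ℝ) - 1 := by
    have : (2 : ℝ) ≤ (n : ℝ) := by exact_mod_cast hn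
    linarith
  set c : ℝ≥0∞ := (n : ℝ≥0∞) - 1 with hc
  have hcr : c = ENNReal.ofReal ((n : ℝ) - 1) := by
    rw [ENNReal.ofReal_sub _ (zero_le_one), ENNReal.ofReal_natCast, ENNReal.ofReal_one]
  have hc0 : c ≠ 0 := by
    rw [hcr]
    simp only [ne_eq, ENNReal.ofReal_eq_zero, not_le]
    linarith
  have hctop : c ≠ ⊤ := by
    rw [hcr]
    exact ENNReal.ofReal_ne_top
  have hmul : c * dInt k (B.module k) (C.module k) =
      ⨅ (ε : ℝ) (_ : Interleaved k ε (B.module k) (C.module k)),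
        c * ENNReal.ofReal ε := by
    rw [dInt, ENNReal.mul_iInf_of_ne hc0 hctop]
    apply iInf_congr
    intro ε
    rw [ENNReal.mul_iInf_of_ne hc0 hctop]
  rw [hmul]
  refine le_iInf fun ε => le_iInf fun hε => ?_
  obtain ⟨hε0, -⟩ := id hε
  have hval : c * ENNReal.ofReal ε = ENNReal.ofReal (((n : ℝ) - 1) * ε) := by
    rw [ENNReal.ofReal_mul (by linarith), hcr]
  rw [hval]
  rw [dBot]
  exact iInf_le_of_le (((n : ℝ) - 1) * ε) (iInf_le _ (key ε hε))
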